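/- Let g be C¹ with ρ-Lipschitz gradient, r proper closed convex, φ = g + r, ρ̂ > ρ, α ∈ (0, 1/ρ̂], x ∈ dom r, x̂ = prox_{φ/ρ̂}(x) with ρ̂(x - x̂) ∈ ∂r(x̂) + ∇g(x̂). Then for x⁺ = prox_{αr}(x - α∇g(x)): ‖x⁺ - x̂‖² ≤ ‖x - x̂‖² - α(ρ̂ - ρ)‖x - x̂‖². -/

import Mathlib

set_option maxHeartbeats 1000000


/-- Deterministic smooth descent lemma (Lemma 2.5 with σ = 0): for `g` C¹ with
`ρ`-Lipschitz gradient, `r` proper closed convex, `φ = g + r`, `ρ̂ > ρ`,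
`α ∈ (0, 1/ρ̂]`, `x̂ = prox_{φ/ρ̂}(x)` with `ρ̂(x - x̂) ∈ ∂r(x̂) + ∇g(x̂)`, the update
`x⁺ = prox_{αr}(x - α∇g(x))` satisfies `‖x⁺ - x̂‖² ≤ ‖x - x̂‖² - α(ρ̂ - ρ)‖x - x̂‖²`. -/
theorem smooth_descent_lemma {d : ℕ}
    (g : EuclideanSpace ℝ (Fin d) → ℝ)
    (g' : EuclideanSpace ℝ (Fin d) → EuclideanSpace ℝ (Fin d))
    (ρ ρhat α : ℝ) (hρ : 0 < ρ) (hρhat : ρ < ρhat) (hα : 0 < α) (hαub : α ≤ 1 / ρhat)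
    (hdiff : ∀ x, HasGradientAt g (g' x) x)
    (hlip : ∀ x y, ‖g' x - g' y‖ ≤ ρ * ‖x - y‖)
    (r : EuclideanSpace ℝ (Fin d) → EReal)
    (hrproper : ∃ x, r x ≠ ⊤) (hrnbot : ∀ x, r x ≠ ⊥)
    (hrclosed : LowerSemicontinuous r)
    (hrconv : ∀ x y : EuclideanSpace ℝ (Fin d), ∀ a b : ℝ, 0 ≤ a → 0 ≤ b → a + b = 1 →
      r (a • x + b • y) ≤ (a : EReal) * r x + (b : EReal) * r y)
    (x xhat xplus : EuclideanSpace ℝ (Fin d))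
    (hxdom : r x ≠ ⊤)
    -- x̂ = prox_{φ/ρ̂}(x):
    (hxhat : ∀ y, (g xhat : EReal) + r xhat + ((ρhat / 2 * ‖xhat - x‖ ^ 2 : ℝ) : EReal) ≤
      (g y : EReal) + r y + ((ρhat / 2 * ‖y - x‖ ^ 2 : ℝ) : EReal))
    -- ρ̂(x - x̂) - ∇g(x̂) ∈ ∂r(x̂):
    (hopt : ∀ y, r y ≥ r xhat +
      ((inner ℝ (ρhat • (x - xhat) - g' xhat) (y - xhat) : ℝ) : EReal))
    -- x⁺ = prox_{αr}(x - α∇g(x)):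
    (hxplus : ∀ y, r xplus + ((1 / (2 * α) * ‖xplus - (x - α • g' x)‖ ^ 2 : ℝ) : EReal) ≤
      r y + ((1 / (2 * α) * ‖y - (x - α • g' x)‖ ^ 2 : ℝ) : EReal)) :
    ‖xplus - xhat‖ ^ 2 ≤ ‖x - xhat‖ ^ 2 - α * (ρhat - ρ) * ‖x - xhat‖ ^ 2 := by
  obtain ⟨rx, hrx⟩ : ∃ c : ℝ, r x = (c : EReal) :=
    ⟨(r x).toReal, (EReal.coe_toReal hxdom (hrnbot x)).symm⟩
  have hhatne : r xhat ≠ ⊤ := by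
    intro h
    have h1 := hxhat x
    rw [h, hrx, ← EReal.coe_add, ← EReal.coe_add] at h1
    rw [EReal.coe_add_top, EReal.top_add_coe] at h1
    exact (EReal.coe_ne_top _) (top_le_iff.mp h1)
  obtain ⟨rh, hrh⟩ : ∃ c : ℝ, r xhat = (c : EReal) :=
    ⟨_, (EReal.coe_toReal hhatne (hrnbot xhat)).symm⟩
  have hplusne : r xplus ≠ ⊤ := by
    intro h
    have h1 := hxplus xhat
    rw [h, hrh, ← EReal.coe_add, EReal.top_add_coe] at h1
    exact (EReal.coe_ne_top _) (top_le_iff.mp h1)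
  obtain ⟨rp, hrp⟩ : ∃ c : ℝ, r xplus = (c : EReal) :=
    ⟨_, (EReal.coe_toReal hplusne (hrnbot xplus)).symm⟩
  set z := x - α • g' x with hzdef
  set u := xplus - xhat with hudef
  set e := x - xhat with hedef
  -- subgradient inequality at xplus
  have hB : rh + (inner ℝ (ρhat • (x - xhat) - g' xhat) u : ℝ) ≤ rp := by
    have h1 := hopt xplus
    rw [hrp, hrh, ← EReal.coe_add] at h1
    exact_mod_cast h1
  -- strong prox inequality toward xhat
  have hC : rp ≤ rh + (1 / α) * (inner ℝ (xplus - z) (xhat - xplus) : ℝ) := by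
    apply le_of_forall_pos_le_add
    intro ε hε
    set I : ℝ := (inner ℝ (xplus - z) (xhat - xplus) : ℝ) with hIdef
    set C : ℝ := 1 / (2 * α) * ‖xhat - xplus‖ ^ 2 with hCdef
    have hC0 : 0 ≤ C := by positivity
    set t := min 1 (ε / (C + 1)) with htdef
    have ht0 : 0 < t := lt_min one_pos (by positivity)
    have ht1 : t ≤ 1 := min_le_left _ _
    have htε : t * C ≤ ε := by
      have h2 : t ≤ ε / (C + 1) := min_le_right _ _
      have h2' : t * C ≤ (ε / (C + 1)) * C := by nlinarith
      calc t * C ≤ (ε / (C + 1)) * C := h2'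
        _ ≤ ε := by rw [div_mul_eq_mul_div, div_le_iff₀ (by positivity)]; nlinarith
    set y := (1 - t) • xplus + t • xhat with hy
    have hconv := hrconv xplus xhat (1 - t) t (by linarith) (le_of_lt ht0) (by ring)
    have hry : r y ≤ (((1 - t) * rp + t * rh : ℝ) : EReal) := by
      rw [hrp, hrh] at hconv
      exact le_trans hconv (by norm_cast)
    have hpx := hxplus y
    have hpx2 : (rp : EReal) + ((1 / (2 * α) * ‖xplus - z‖ ^ 2 : ℝ) : EReal)
        ≤ (((1 - t) * rp + t * rh + 1 / (2 * α) * ‖y - z‖ ^ 2 : ℝ) : EReal) := by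
      rw [← hrp]
      refine le_trans hpx ?_
      rw [EReal.coe_add]
      exact add_le_add hry le_rfl
    rw [← EReal.coe_add] at hpx2
    have hreal : rp + 1 / (2 * α) * ‖xplus - z‖ ^ 2
        ≤ (1 - t) * rp + t * rh + 1 / (2 * α) * ‖y - z‖ ^ 2 := by exact_mod_cast hpx2
    have hyz : y - z = (xplus - z) + t • (xhat - xplus) := by
      rw [hy]; module
    have hexp : ‖y - z‖ ^ 2 = ‖xplus - z‖ ^ 2
        + 2 * (t * I) + t ^ 2 * ‖xhat - xplus‖ ^ 2 := by
      rw [hyz, norm_add_sq_real, real_inner_smul_right, norm_smul]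
      rw [Real.norm_eq_abs, mul_pow, sq_abs, hIdef]
    rw [hexp] at hreal
    have h3 : 0 ≤ t * (rh + (1 / α) * I + t * C - rp) := by
      have h := sub_nonneg.2 hreal
      have hid : (1 - t) * rp + t * rh
          + 1 / (2 * α) * (‖xplus - z‖ ^ 2 + 2 * (t * I) + t ^ 2 * ‖xhat - xplus‖ ^ 2)
          - (rp + 1 / (2 * α) * ‖xplus - z‖ ^ 2)
          = t * (rh + (1 / α) * I + t * C - rp) := by
        rw [hCdef]; field_simp; ring
      rw [hid] at h
      exact h
    have h4 : 0 ≤ rh + (1 / α) * I + t * C - rp := by nlinarith [h3, ht0]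
    linarith
  -- combine
  have hkey : ‖u‖ ^ 2 + (α * ρhat - 1) * (inner ℝ e u : ℝ)
      + α * (inner ℝ (g' x - g' xhat) u : ℝ) ≤ 0 := by
    have h4 : α * ((inner ℝ (ρhat • (x - xhat) - g' xhat) u : ℝ))
        ≤ α * ((1 / α) * (inner ℝ (xplus - z) (xhat - xplus) : ℝ)) := by
      have := hB.trans hC
      have h5 : (inner ℝ (ρhat • (x - xhat) - g' xhat) u : ℝ)
          ≤ (1 / α) * (inner ℝ (xplus - z) (xhat - xplus) : ℝ) := by linarith
      exact mul_le_mul_of_nonneg_left h5 (le_of_lt hα)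
    have e1 : (inner ℝ (ρhat • (x - xhat) - g' xhat) u : ℝ)
        = ρhat * (inner ℝ e u : ℝ) - (inner ℝ (g' xhat) u : ℝ) := by
      rw [hedef, inner_sub_left, real_inner_smul_left]
    have e2 : (inner ℝ (xplus - z) (xhat - xplus) : ℝ)
        = -(‖u‖ ^ 2 - (inner ℝ e u : ℝ) + α * (inner ℝ (g' x) u : ℝ)) := by
      have hxz : xplus - z = u - e + α • g' x := by
        rw [hudef, hedef, hzdef]; abel
      have hneg : xhat - xplus = -u := by rw [hudef, neg_sub]
      rw [hxz, hneg, inner_neg_right, inner_add_left, inner_sub_left, real_inner_smul_left,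
        real_inner_self_eq_norm_sq]
    have e3 : (inner ℝ (g' x - g' xhat) u : ℝ)
        = (inner ℝ (g' x) u : ℝ) - (inner ℝ (g' xhat) u : ℝ) := by rw [inner_sub_left]
    rw [e1, e2] at h4
    rw [← mul_assoc, mul_one_div_cancel (ne_of_gt hα), one_mul] at h4
    rw [e3]
    nlinarith [h4]
  -- Cauchy-Schwarz and Lipschitz
  have cs1 : |(inner ℝ e u : ℝ)| ≤ ‖e‖ * ‖u‖ := abs_real_inner_le_norm e u
  have cs2 : |(inner ℝ (g' x - g' xhat) u : ℝ)| ≤ ‖g' x - g' xhat‖ * ‖u‖ :=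
    abs_real_inner_le_norm _ u
  have hlip' : ‖g' x - g' xhat‖ ≤ ρ * ‖e‖ := hlip x xhat
  have h1ρ : α * ρhat ≤ 1 := by
    rw [le_div_iff₀ (by linarith : (0:ℝ) < ρhat)] at hαub; linarith
  have hu2 : ‖u‖ ^ 2 ≤ (1 - α * (ρhat - ρ)) * (‖e‖ * ‖u‖) := by
    have a1 : -(‖e‖ * ‖u‖) ≤ (inner ℝ e u : ℝ) := neg_le_of_abs_le cs1
    have a2 : (inner ℝ e u : ℝ) ≤ ‖e‖ * ‖u‖ := le_of_abs_le cs1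
    have a3 : -(‖g' x - g' xhat‖ * ‖u‖) ≤ (inner ℝ (g' x - g' xhat) u : ℝ) :=
      neg_le_of_abs_le cs2
    have hun : 0 ≤ ‖u‖ := norm_nonneg u
    nlinarith [hkey, mul_le_mul_of_nonneg_right hlip' hun]
  have hc1 : 0 < α * (ρhat - ρ) := mul_pos hα (by linarith)
  have hc2 : α * (ρhat - ρ) ≤ 1 := by nlinarith
  rcases eq_or_lt_of_le (norm_nonneg u) with h0 | h0
  · rw [← h0]
    have h6 : (0:ℝ) ≤ (1 - α * (ρhat - ρ)) * ‖e‖ ^ 2 :=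
      mul_nonneg (by linarith) (sq_nonneg _)
    nlinarith [h6]
  · have hNE : ‖u‖ ≤ (1 - α * (ρhat - ρ)) * ‖e‖ := by
      nlinarith [hu2]
    have hsq : ‖u‖ ^ 2 ≤ ((1 - α * (ρhat - ρ)) * ‖e‖) ^ 2 :=
      pow_le_pow_left₀ (norm_nonneg u) hNE 2
    nlinarith [hsq, mul_nonneg (mul_nonneg (by linarith : (0:ℝ) ≤ 1 - α * (ρhat - ρ)) hc1.le)
      (sq_nonneg ‖e‖)]
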